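/- The element 𝚎_n := (−1)^{binom(n,3)} ∂_{w_0} x^δ of the odd nilHecke algebra ONH_n is an idempotent: 𝚎_n² = 𝚎_n. -/

import Mathlib

/-- The (0-indexed) word `∂_1(∂_2∂_1)⋯(∂_{n−1}⋯∂_1)` of simple indices defining
the longest odd divided difference operator `∂_{w_0}`. -/
def w0List : ℕ → List ℕ
  | 0 => []
  | n + 1 => w0List n ++ (List.range n).reverse

/-- The staircase monomial `x^δ = x_1^{n−1} x_2^{n−2} ⋯ x_{n−1}`. -/
noncomputable def xDeltaN {A : Type*} [Ring A] (n : ℕ) (x : ℕ → A) : A :=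
  ((List.range n).map fun i => x i ^ (n - 1 - i)).prod

/-- The element `𝚎_n = (−1)^{C(n,3)} ∂_{w_0} x^δ` of the odd nilHecke algebra. -/
noncomputable def onhIdem {A : Type*} [Ring A] (n : ℕ) (x D : ℕ → A) : A :=
  (-1 : A) ^ (n.choose 3) * (((w0List n).map D).prod * xDeltaN n x)

namespace ONH5

def blocksFrom : ℕ → ℕ → List ℕ
  | _, 0 => []
  | m, c + 1 => (List.range m).reverse ++ blocksFrom (m + 1) c

def Gf (n m j i : ℕ) : ℕ := if i < j then min (n-1-i) (n-m) else min (n-1-i) (n-1-m)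

def gaussN (k : ℕ) : ℕ := ∑ i ∈ Finset.range k, i

def sExpN (n m j : ℕ) : ℕ := (∑ i ∈ Finset.range n, Gf n m (j+1) i) + j*(n-m) + (n-m)

/-! ### pure list/arith lemmas -/

@[simp] lemma blocksFrom_zero (m : ℕ) : blocksFrom m 0 = [] := rfl
@[simp] lemma blocksFrom_succ (m c : ℕ) :
    blocksFrom m (c+1) = (List.range m).reverse ++ blocksFrom (m+1) c := rfl

lemma blocksFrom_snoc : ∀ (c m : ℕ),
    blocksFrom m (c+1) = blocksFrom m c ++ (List.range (m+c)).reverse := by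
  intro c
  induction c with
  | zero => intro m; simp
  | succ c ih =>
      intro m
      rw [blocksFrom_succ m (c+1), ih (m+1), blocksFrom_succ m c, List.append_assoc]
      rw [show m+1+c = m+(c+1) from by omega]

lemma w0List_eq_blocksFrom (n : ℕ) : w0List n = blocksFrom 1 (n - 1) := by
  induction n with
  | zero => rfl
  | succ n ih =>
      cases n with
      | zero => rfl
      | succ k =>
          rw [w0List, ih, show k+1-1 = k from by omega, show k+1+1-1 = k+1 from by omega,
            blocksFrom_snoc k 1, show 1+k = k+1 from by omega]

lemma mem_w0List_lt (n : ℕ) : ∀ k ∈ w0List n, k + 1 < n := by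
  induction n with
  | zero => intro k hk; simp [w0List] at hk
  | succ n ih =>
      intro k hk
      rw [w0List, List.mem_append] at hk
      rcases hk with h | h
      · exact Nat.lt_succ_of_lt (ih k h)
      · simp [List.mem_reverse, List.mem_range] at h; omega

lemma range_split (j n : ℕ) (h : j + 2 ≤ n) :
    List.range n = (List.range j ++ [j, j+1]) ++ List.range' (j+2) (n-(j+2)) := by
  have h2 : List.range (j+2) ++ List.range' (j+2) (n-(j+2)) = List.range n := by
    have := List.range'_append (s := 0) (m := j+2) (n := n-(j+2)) (step := 1)
    simp only [one_mul, zero_add] at this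
    rw [show j+2+(n-(j+2)) = n from by omega] at this
    rw [List.range_eq_range' (n := j+2), List.range_eq_range' (n := n)]
    exact this
  have h3 : List.range (j+2) = List.range j ++ [j, j+1] := by
    rw [show j+2 = (j+1)+1 from rfl, List.range_succ, List.range_succ, List.append_assoc]
    rfl
  rw [← h2, h3]

lemma list_range'_sum_eq_Ico (g : ℕ → ℕ) : ∀ (k s : ℕ),
    ((List.range' s k).map g).sum = ∑ i ∈ Finset.Ico s (s+k), g i := by
  intro k
  induction k with
  | zero => intro s; simp
  | succ k ih =>
      intro s
      rw [show s+(k+1) = (s+1)+k from by omega, List.range'_succ,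
        Finset.sum_eq_sum_Ico_succ_bot (show s < (s+1)+k by omega)]
      simp only [List.map_cons, List.sum_cons, ih (s+1)]

/-! ### arithmetic of the total sign -/

lemma gauss_succ (k : ℕ) : gaussN (k+1) = gaussN k + k :=
  Finset.sum_range_succ (fun i => i) k

lemma gauss_choose (k : ℕ) : gaussN k = k.choose 2 := by
  induction k with
  | zero => rfl
  | succ k ih =>
      rw [gauss_succ, ih, Nat.choose_succ_succ k 1, Nat.choose_one_right, Nat.add_comm]

lemma sum_gauss (n : ℕ) : ∑ b ∈ Finset.range n, gaussN b = n.choose 3 := by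
  induction n with
  | zero => rfl
  | succ n ih =>
      rw [Finset.sum_range_succ, ih, gauss_choose, Nat.choose_succ_succ n 2, Nat.add_comm]


lemma sum_range_sub_one (b : ℕ) : ∑ j ∈ Finset.range b, (b-1-j) = gaussN b :=
  Finset.sum_range_reflect (fun j => j) b

lemma DsumVal {n b j : ℕ} (hb : 1 ≤ b) (hbn : b < n) (hj : j < b) :
    ∑ i ∈ Finset.range n, Gf n b (j+1) i
      = (j+1)*(n-b) + ((b-1-j)*(n-1-b) + gaussN (n-b)) := by
  rw [Finset.range_eq_Ico,
    ← Finset.sum_Ico_consecutive (fun i => Gf n b (j+1) i) (Nat.zero_le (j+1)) (by omega : j+1 ≤ n),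
    ← Finset.sum_Ico_consecutive (fun i => Gf n b (j+1) i) (by omega : j+1 ≤ b) (by omega : b ≤ n)]
  have h1 : ∑ i ∈ Finset.Ico 0 (j+1), Gf n b (j+1) i = (j+1)*(n-b) := by
    rw [Finset.sum_congr rfl (fun i hi => by
      have := Finset.mem_Ico.mp hi
      show Gf n b (j+1) i = n-b
      simp only [Gf]; split_ifs <;> omega)]
    simp [mul_comm]
  have h2 : ∑ i ∈ Finset.Ico (j+1) b, Gf n b (j+1) i = (b-1-j)*(n-1-b) := by
    rw [Finset.sum_congr rfl (fun i hi => by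
      have := Finset.mem_Ico.mp hi
      show Gf n b (j+1) i = n-1-b
      simp only [Gf]; split_ifs <;> omega)]
    simp only [Finset.sum_const, Nat.card_Ico, smul_eq_mul]
    congr 1
    omega
  have h3 : ∑ i ∈ Finset.Ico b n, Gf n b (j+1) i = gaussN (n-b) := by
    rw [Finset.sum_congr rfl (fun i hi => by
      have := Finset.mem_Ico.mp hi
      show Gf n b (j+1) i = n-1-i
      simp only [Gf]; split_ifs <;> omega)]
    rw [Finset.sum_Ico_eq_sum_range]
    rw [Finset.sum_congr rfl (fun k hk => by
      have := Finset.mem_range.mp hk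
      show n-1-(b+k) = (n-b)-1-k
      omega)]
    exact sum_range_sub_one (n-b)
  rw [h1, h2, h3]

lemma blockSum {n b : ℕ} (hb : 1 ≤ b) (hbn : b < n) :
    ∑ j ∈ Finset.range b, sExpN n b j
      = (n-1-b)*gaussN b + b*gaussN (n-b) + 2*((n-b)*(gaussN b + b)) := by
  have h1 : ∑ j ∈ Finset.range b, sExpN n b j
      = ∑ j ∈ Finset.range b,
          ((j+1)*(n-b) + ((b-1-j)*(n-1-b) + gaussN (n-b)) + (j*(n-b) + (n-b))) := by
    refine Finset.sum_congr rfl (fun j hj => ?_)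
    have hjb := Finset.mem_range.mp hj
    rw [sExpN, DsumVal hb hbn hjb, Nat.add_assoc]
  rw [h1]
  simp only [Finset.sum_add_distrib, ← Finset.sum_mul, Finset.sum_const, Finset.card_range,
    smul_eq_mul]
  have e2 : ∑ j ∈ Finset.range b, j = gaussN b := rfl
  rw [e2, sum_range_sub_one]
  ring

lemma icoReflect (n : ℕ) (f : ℕ → ℕ) :
    ∑ b ∈ Finset.Ico 1 n, f b = ∑ b ∈ Finset.Ico 1 n, f (n-b) := by
  rw [Finset.sum_Ico_eq_sum_range, Finset.sum_Ico_eq_sum_range,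
    ← Finset.sum_range_reflect (fun k => f (1+k)) (n-1)]
  refine Finset.sum_congr rfl (fun k hk => by
    have := Finset.mem_range.mp hk
    congr 1
    omega)

lemma totalParity (n : ℕ) : ∃ K : ℕ,
    ∑ b ∈ Finset.Ico 1 n, ∑ j ∈ Finset.range b, sExpN n b j = n.choose 3 + 2*K := by
  rcases Nat.eq_zero_or_pos n with h0 | hn
  · subst h0; exact ⟨0, rfl⟩
  have h1 : ∑ b ∈ Finset.Ico 1 n, ∑ j ∈ Finset.range b, sExpN n b j
      = ∑ b ∈ Finset.Ico 1 n,
          ((n-1-b)*gaussN b + b*gaussN (n-b) + 2*((n-b)*(gaussN b + b))) := by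
    refine Finset.sum_congr rfl (fun b hb => ?_)
    have hbb := Finset.mem_Ico.mp hb
    exact blockSum hbb.1 hbb.2
  have h2 : ∑ b ∈ Finset.Ico 1 n, b*gaussN (n-b)
      = ∑ b ∈ Finset.Ico 1 n, (n-b)*gaussN b := by
    rw [icoReflect n (fun b => b*gaussN (n-b))]
    refine Finset.sum_congr rfl (fun b hb => ?_)
    have hbb := Finset.mem_Ico.mp hb
    rw [show n-(n-b) = b from by omega]
  have h3 : ∑ b ∈ Finset.Ico 1 n, gaussN b = n.choose 3 := by
    rw [← sum_gauss n, Finset.range_eq_Ico, Finset.sum_eq_sum_Ico_succ_bot hn]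
    simp [gaussN]
  refine ⟨(∑ b ∈ Finset.Ico 1 n, (n-1-b)*gaussN b)
    + (∑ b ∈ Finset.Ico 1 n, ((n-b)*(gaussN b + b))), ?_⟩
  rw [h1]
  simp only [Finset.sum_add_distrib]
  rw [h2, ← h3]
  have h4 : ∑ b ∈ Finset.Ico 1 n, (n-b)*gaussN b
      = ∑ b ∈ Finset.Ico 1 n, ((n-1-b)*gaussN b + gaussN b) := by
    refine Finset.sum_congr rfl (fun b hb => ?_)
    have hbb := Finset.mem_Ico.mp hb
    rw [show n-b = (n-1-b)+1 from by omega]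
    ring
  rw [h4]
  simp only [Finset.sum_add_distrib, ← Finset.mul_sum]
  ring

/-! ### signs -/

section Ring
variable {A : Type*} [Ring A]

/-- product of `D`'s along a word -/
def PD (D : ℕ → A) (L : List ℕ) : A := (L.map D).prod

/-- ordered monomial with exponent vector `e` -/
noncomputable def evalX (n : ℕ) (x : ℕ → A) (e : ℕ → ℕ) : A :=
  ((List.range n).map fun i => x i ^ e i).prod

lemma sgn_comm (t : ℕ) (y : A) : y * (-1:A)^t = (-1:A)^t * y :=
  ((Commute.neg_one_left y).pow_left t).symm.eq

lemma negOnePow_eq_of {α β k : ℕ} (h : α = β + 2*k) : (-1:A)^α = (-1:A)^β := by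
  subst h
  rw [pow_add, pow_mul, neg_one_sq, one_pow, mul_one]

lemma negOnePow_mul_self (k : ℕ) : (-1:A)^(k*k) = (-1:A)^k := by
  rcases Nat.even_or_odd k with h | h
  · rw [h.neg_one_pow, (h.mul_right k).neg_one_pow]
  · rw [h.neg_one_pow, (h.mul h).neg_one_pow]

lemma prod_comm_sign {β : Type*} (c : A) (f : β → A) (g : β → ℕ) :
    ∀ L : List β, (∀ b ∈ L, f b * c = (-1:A)^(g b) * (c * f b)) →
    (L.map f).prod * c = (-1:A)^((L.map g).sum) * (c * (L.map f).prod) := by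
  intro L
  induction L with
  | nil => intro _; simp
  | cons b L ih =>
      intro h
      simp only [List.map_cons, List.prod_cons, List.sum_cons]
      calc (f b * (L.map f).prod) * c
          = f b * ((L.map f).prod * c) := by rw [mul_assoc]
        _ = f b * ((-1:A)^((L.map g).sum) * (c * (L.map f).prod)) := by
            rw [ih (fun b hb => h b (List.mem_cons_of_mem _ hb))]
        _ = (-1:A)^((L.map g).sum) * ((f b * c) * (L.map f).prod) := by
            rw [← mul_assoc, sgn_comm, mul_assoc, ← mul_assoc (f b)]
        _ = (-1:A)^((L.map g).sum) * (((-1:A)^(g b) * (c * f b)) * (L.map f).prod) := by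
            rw [h b List.mem_cons_self]
        _ = ((-1:A)^((L.map g).sum) * (-1:A)^(g b)) * (c * (f b * (L.map f).prod)) := by
            simp only [mul_assoc]
        _ = (-1:A)^(g b + (L.map g).sum) * (c * (f b * (L.map f).prod)) := by
            rw [← pow_add, Nat.add_comm]

variable {n : ℕ} {x D : ℕ → A}

lemma mul_sign_swap_pow {a b : A} (h : a * b = -(b * a)) : ∀ q, a * b^q = (-1:A)^q * (b^q * a) := by
  intro q
  induction q with
  | zero => simp
  | succ q ih =>
      calc a * b^(q+1) = (a * b^q) * b := by rw [pow_succ, mul_assoc]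
        _ = ((-1:A)^q * (b^q * a)) * b := by rw [ih]
        _ = (-1:A)^q * (b^q * (a * b)) := by simp only [mul_assoc]
        _ = (-1:A)^q * (b^q * -(b * a)) := by rw [h]
        _ = (-1:A)^(q+1) * (b^(q+1) * a) := by
            simp only [pow_succ, mul_assoc, mul_neg, neg_mul, mul_one, neg_one_mul]

lemma pow_sign_swap {a b : A} (h : a * b = -(b * a)) (p q : ℕ) :
    a^p * b^q = (-1:A)^(p*q) * (b^q * a^p) := by
  induction p with
  | zero => simp
  | succ p ih =>
      calc a^(p+1) * b^q = a^p * (a * b^q) := by rw [pow_succ, mul_assoc]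
        _ = (a^p * (-1:A)^q) * (b^q * a) := by rw [mul_sign_swap_pow h, mul_assoc]
        _ = (-1:A)^q * ((a^p * b^q) * a) := by rw [sgn_comm]; simp only [mul_assoc]
        _ = (-1:A)^q * (((-1:A)^(p*q) * (b^q * a^p)) * a) := by rw [ih]
        _ = ((-1:A)^q * (-1:A)^(p*q)) * (b^q * (a^p * a)) := by simp only [mul_assoc]
        _ = (-1:A)^((p+1)*q) * (b^q * a^(p+1)) := by
            rw [← pow_add, pow_succ, show q + p*q = (p+1)*q from by ring]

/-- `D j` anticommutes with powers of distant variables -/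
lemma D_xpow_comm (hDx : ∀ i j, i + 1 < n → j < n → j ≠ i → j ≠ i + 1 → D i * x j = -(x j * D i))
    {j i : ℕ} (hj : j + 1 < n) (hi : i < n) (h1 : i ≠ j) (h2 : i ≠ j + 1) (p : ℕ) :
    x i ^ p * D j = (-1:A)^p * (D j * x i ^ p) := by
  have h : x i * D j = -(D j * x i) := by rw [hDx j i hj hi h1 h2, neg_neg]
  simpa using pow_sign_swap h p 1

/-- powers of distinct variables commute up to sign -/
lemma xpow_comm (hxx : ∀ i j, i < n → j < n → i ≠ j → x i * x j = -(x j * x i))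
    {i k : ℕ} (hi : i < n) (hk : k < n) (hik : i ≠ k) (p q : ℕ) :
    x i ^ p * x k ^ q = (-1:A)^(p*q) * (x k ^ q * x i ^ p) :=
  pow_sign_swap (hxx i k hi hk hik) p q

/-- generic expansion: from `v·d = 1 − d·u` move `d` through powers of `v`. -/
lemma expand_gen {u v d : A} (hv : v * d = 1 - d * u) : ∀ k : ℕ,
    v^k * d = (∑ t ∈ Finset.range k, (-1:A)^t * (v^(k-1-t) * u^t)) + (-1:A)^k * (d * u^k) := by
  intro k
  induction k with
  | zero => simp
  | succ k ih =>
      have s1 : (∑ t ∈ Finset.range k, (-1:A)^t * (v^(k-1-t) * u^t)) * u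
          = ∑ t ∈ Finset.range k, (-1:A)^t * (v^(k-1-t) * u^(t+1)) := by
        rw [Finset.sum_mul]
        exact Finset.sum_congr rfl fun t _ => by
          simp only [mul_assoc, ← pow_succ]
      have s2 : ((-1:A)^k * (d * u ^ k)) * u = (-1:A)^k * (d * u^(k+1)) := by
        simp only [mul_assoc, ← pow_succ]
      calc v^(k+1) * d = v^k * (v * d) := by rw [pow_succ, mul_assoc]
        _ = v^k - (v^k * d) * u := by rw [hv, mul_sub, mul_one, mul_assoc]
        _ = v^k - ((∑ t ∈ Finset.range k, (-1:A)^t * (v^(k-1-t) * u^t)) * u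
              + ((-1:A)^k * (d * u ^ k)) * u) := by rw [ih, add_mul]
        _ = v^k - (∑ t ∈ Finset.range k, (-1:A)^t * (v^(k-1-t) * u^(t+1)))
              - (-1:A)^k * (d * u^(k+1)) := by rw [s1, s2, sub_sub]
        _ = (∑ t ∈ Finset.range (k+1), (-1:A)^t * (v^(k-t) * u^t)) + (-1:A)^(k+1) * (d * u^(k+1)) := by
            rw [Finset.sum_range_succ']
            have e1 : ∀ t, (-1:A)^(t+1) * (v^(k-(t+1)) * u^(t+1))
                = -((-1:A)^t * (v^(k-1-t) * u^(t+1))) := by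
              intro t
              rw [show k-(t+1) = k-1-t from by omega, pow_succ, mul_neg_one, neg_mul]
            simp only [e1, Finset.sum_neg_distrib, pow_zero, Nat.sub_zero, one_mul, mul_one]
            rw [show ((-1:A))^(k+1) = -((-1:A))^k from by rw [pow_succ, mul_neg_one], neg_mul]
            abel

lemma mul_sgn_mid (y z : A) (t : ℕ) : y * ((-1:A)^t * z) = (-1:A)^t * (y * z) := by
  rw [← mul_assoc, sgn_comm, mul_assoc]

lemma odd_aux (t b : ℕ) : Odd ((t + b*t) + ((t+b+1) + (b + b*(t+b+1)))) := by
  obtain ⟨c, hc⟩ : Even (b*b + b) := by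
    have := Nat.even_mul_succ_self b
    rwa [show b*(b+1) = b*b + b from by ring] at this
  refine ⟨t + b + b*t + c, ?_⟩
  have hexp : b*(t+b+1) = b*t + b*b + b := by ring
  rw [hexp]
  linarith [hc]

lemma neg_one_pow_sum_zero {α β : ℕ} (h : Odd (α+β)) (M : A) :
    (-1:A)^α * M + (-1:A)^β * M = 0 := by
  have hββ : ((-1:A))^β * (-1:A)^β = 1 := by
    have he : Even (β+β) := ⟨β, rfl⟩
    rw [← pow_add]; exact he.neg_one_pow
  have h2 : (-1:A)^α = -((-1:A)^β) := by
    calc (-1:A)^α = (-1:A)^α * ((-1:A)^β * (-1:A)^β) := by rw [hββ, mul_one]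
      _ = ((-1:A)^(α+β)) * (-1:A)^β := by rw [← mul_assoc, ← pow_add]
      _ = -((-1:A)^β) := by rw [h.neg_one_pow, neg_one_mul]
  rw [h2, neg_mul]
  abel

/-- **Core two-variable lemma**: `x_j^{a'+1} x_{j+1}^{a'} ∂_j ≡ (-1)^{a'} x_j^{a'} x_{j+1}^{a'}`
modulo the left ideal `∂_j A`. -/
lemma core (hxx : ∀ i j, i < n → j < n → i ≠ j → x i * x j = -(x j * x i))
    (hmixa : ∀ i, i + 1 < n → x i * D i + D i * x (i + 1) = 1)
    (hmixb : ∀ i, i + 1 < n → D i * x i + x (i + 1) * D i = 1)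
    {j a' : ℕ} (hj : j + 1 < n) :
    ∃ z : A, (x j ^ (a'+1) * x (j+1) ^ a') * D j
      = D j * z + (-1:A)^a' * (x j ^ a' * x (j+1) ^ a') := by
  have hjn : j < n := by omega
  have hu : x j * D j = 1 - D j * x (j+1) := eq_sub_of_add_eq (hmixa j hj)
  have hv : x (j+1) * D j = 1 - D j * x j := by
    refine eq_sub_of_add_eq ?_
    rw [add_comm]; exact hmixb j hj
  have hvu : ∀ p q, x (j+1)^p * x j^q = (-1:A)^(p*q) * (x j^q * x (j+1)^p) :=
    fun p q => pow_sign_swap (hxx (j+1) j hj hjn (by omega)) p q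
  refine ⟨-(x (j+1)^(a'+1) * x j^a'), ?_⟩
  have E1 := expand_gen hv a'
  have E2 := expand_gen hu (a'+1)
  simp only [Nat.add_sub_cancel] at E2
  -- split the top term off E2's sum
  rw [Finset.sum_range_succ, Nat.sub_self, pow_zero, one_mul] at E2
  -- Piece A: u^{a'+1} * (sum of E1)
  have hA : x j^(a'+1) * (∑ t ∈ Finset.range a', (-1:A)^t * (x (j+1)^(a'-1-t) * x j^t))
      = ∑ t ∈ Finset.range a',
          (-1:A)^(t + (a'-1-t)*t) * (x j^((a'+1)+t) * x (j+1)^(a'-1-t)) := by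
    rw [Finset.mul_sum]
    refine Finset.sum_congr rfl fun t ht => ?_
    rw [mul_sgn_mid, hvu (a'-1-t) t, mul_sgn_mid, ← mul_assoc (x j^(a'+1)), ← pow_add,
      ← mul_assoc, ← pow_add]
  -- Piece B: (sum of E2) * u^{a'}
  have hB : (∑ s ∈ Finset.range a', (-1:A)^s * (x j^(a'-s) * x (j+1)^s)) * x j^a'
      = ∑ s ∈ Finset.range a', (-1:A)^(s + s*a') * (x j^((a'-s)+a') * x (j+1)^s) := by
    rw [Finset.sum_mul]
    refine Finset.sum_congr rfl fun s hs => ?_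
    rw [mul_assoc, mul_assoc, hvu s a', mul_sgn_mid, mul_sgn_mid, ← mul_assoc (x j^(a'-s)),
      ← pow_add, ← mul_assoc, ← pow_add, Nat.add_comm (s*a') s]
  -- scalar times piece B, reflected
  have hBsum : (-1:A)^a' * (∑ s ∈ Finset.range a', (-1:A)^(s + s*a') * (x j^((a'-s)+a') * x (j+1)^s))
      = ∑ t ∈ Finset.range a',
          (-1:A)^(a' + ((a'-1-t) + (a'-1-t)*a')) * (x j^((a'+1)+t) * x (j+1)^(a'-1-t)) := by
    rw [Finset.mul_sum, ← Finset.sum_range_reflect]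
    refine Finset.sum_congr rfl fun t ht => ?_
    have htl : t < a' := Finset.mem_range.mp ht
    rw [← mul_assoc, ← pow_add, show (a'-(a'-1-t))+a' = (a'+1)+t from by omega]
  -- the two sums cancel
  have hcancel : (∑ t ∈ Finset.range a',
        (-1:A)^(t + (a'-1-t)*t) * (x j^((a'+1)+t) * x (j+1)^(a'-1-t)))
      + (∑ t ∈ Finset.range a',
        (-1:A)^(a' + ((a'-1-t) + (a'-1-t)*a')) * (x j^((a'+1)+t) * x (j+1)^(a'-1-t))) = 0 := by
    rw [← Finset.sum_add_distrib]
    refine Finset.sum_eq_zero fun t ht => ?_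
    have htl : t < a' := Finset.mem_range.mp ht
    refine neg_one_pow_sum_zero ?_ _
    have hb : a' = t + (a'-1-t) + 1 := by omega
    have := odd_aux t (a'-1-t)
    rw [show t + (a'-1-t)*t + (a' + ((a'-1-t) + (a'-1-t)*a'))
        = t + (a'-1-t)*t + ((t+(a'-1-t)+1) + ((a'-1-t) + (a'-1-t)*(t+(a'-1-t)+1))) from by
      rw [← hb]]
    exact this
  -- the top term of E2 contributes the answer
  have htop : (-1:A)^a' * (((-1:A)^a' * x (j+1)^a') * x j^a')
      = (-1:A)^a' * (x j^a' * x (j+1)^a') := by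
    have he : Even (a'+a') := ⟨a', rfl⟩
    calc (-1:A)^a' * (((-1:A)^a' * x (j+1)^a') * x j^a')
        = ((-1:A)^a' * (-1:A)^a') * (x (j+1)^a' * x j^a') := by simp only [mul_assoc]
      _ = x (j+1)^a' * x j^a' := by rw [← pow_add, he.neg_one_pow, one_mul]
      _ = (-1:A)^(a'*a') * (x j^a' * x (j+1)^a') := hvu a' a'
      _ = (-1:A)^a' * (x j^a' * x (j+1)^a') := by rw [negOnePow_mul_self]
  -- the d-term of E2 contributes D j * z
  have hdz : (-1:A)^a' * (((-1:A)^(a'+1) * (D j * x (j+1)^(a'+1))) * x j^a')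
      = D j * -(x (j+1)^(a'+1) * x j^a') := by
    have ho : Odd (a' + (a'+1)) := ⟨a', by omega⟩
    rw [← mul_assoc, ← mul_assoc, ← pow_add, ho.neg_one_pow, neg_one_mul, neg_mul, mul_assoc,
      ← mul_neg]
  calc (x j ^ (a'+1) * x (j+1) ^ a') * D j
      = x j^(a'+1) * (x (j+1)^a' * D j) := by rw [mul_assoc]
    _ = x j^(a'+1) * (∑ t ∈ Finset.range a', (-1:A)^t * (x (j+1)^(a'-1-t) * x j^t))
        + (-1:A)^a' * ((x j^(a'+1) * D j) * x j^a') := by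
        rw [E1, mul_add, mul_sgn_mid, ← mul_assoc (x j^(a'+1)) (D j) (x j^a')]
    _ = x j^(a'+1) * (∑ t ∈ Finset.range a', (-1:A)^t * (x (j+1)^(a'-1-t) * x j^t))
        + ((-1:A)^a' * ((∑ s ∈ Finset.range a', (-1:A)^s * (x j^(a'-s) * x (j+1)^s)) * x j^a')
          + ((-1:A)^a' * (((-1:A)^a' * x (j+1)^a') * x j^a')
            + (-1:A)^a' * (((-1:A)^(a'+1) * (D j * x (j+1)^(a'+1))) * x j^a'))) := by
        rw [E2, add_mul, add_mul, mul_add, mul_add, add_assoc]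
    _ = 0 + ((-1:A)^a' * (x j^a' * x (j+1)^a') + D j * -(x (j+1)^(a'+1) * x j^a')) := by
        rw [hA, hB, hBsum, htop, hdz, ← add_assoc, ← add_assoc, hcancel]
        abel
    _ = D j * -(x (j+1)^(a'+1) * x j^a') + (-1:A)^a' * (x j ^ a' * x (j+1) ^ a') := by
        abel

lemma PD_append (L1 L2 : List ℕ) : (PD D (L1 ++ L2) : A) = PD D L1 * PD D L2 := by
  simp [PD]

lemma PD_cons (k : ℕ) (L : List ℕ) : (PD D (k :: L) : A) = D k * PD D L := by
  simp [PD]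

/-- move `D k` leftwards through a product of distant `D`'s -/
lemma PD_anticomm (hDDdist : ∀ i j, i + 1 < n → j + 1 < n → (i + 1 < j ∨ j + 1 < i) →
      D i * D j = -(D j * D i))
    (L : List ℕ) (k : ℕ) (hk : k + 1 < n)
    (hL : ∀ ℓ ∈ L, ℓ + 1 < n ∧ (ℓ + 1 < k ∨ k + 1 < ℓ)) :
    (PD D L : A) * D k = (-1:A)^L.length * (D k * PD D L) := by
  have := prod_comm_sign (D k) (D : ℕ → A) (fun _ => 1) L (fun ℓ hℓ => by
    obtain ⟨h1, h2⟩ := hL ℓ hℓ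
    rw [pow_one, hDDdist ℓ k h1 hk h2, neg_one_mul])
  simpa [PD, List.map_const'] using this

lemma revRange_zero_decomp (m : ℕ) (h : 1 ≤ m) :
    (List.range m).reverse = (List.range' 1 (m-1)).reverse ++ [0] := by
  have : List.range m = [0] ++ List.range' 1 (m-1) := by
    have := List.range'_append (s := 0) (m := 1) (n := m-1) (step := 1)
    simp only [one_mul, zero_add] at this
    rw [show 1+(m-1) = m from by omega] at this
    rw [List.range_eq_range', ← this]
    rfl
  rw [this]
  simp

lemma revRange_decomp (m k : ℕ) (h1 : 1 ≤ k) (h2 : k < m) :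
    (List.range m).reverse
      = (List.range' (k+1) (m-(k+1))).reverse ++ (k :: (k-1) :: (List.range (k-1)).reverse) := by
  have hs := range_split (k-1) m (by omega)
  rw [show (k-1)+1 = k from by omega, show (k-1)+2 = k+1 from by omega] at hs
  rw [hs]
  simp [List.reverse_append]

lemma Pzero (hDDdist : ∀ i j, i + 1 < n → j + 1 < n → (i + 1 < j ∨ j + 1 < i) →
      D i * D j = -(D j * D i))
    (hD2 : ∀ i, i + 1 < n → D i * D i = 0)
    (hbraid : ∀ i, i + 2 < n → D i * D (i + 1) * D i = D (i + 1) * D i * D (i + 1)) :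
    ∀ m, m ≤ n → ∀ k, k + 1 < m → (PD D (w0List m) : A) * D k = 0 := by
  intro m
  induction m with
  | zero => intro _ k hk; omega
  | succ m ih =>
      intro hmn k hk
      have hm1 : 1 ≤ m := by omega
      have hkn : k + 1 < n := by omega
      rw [show w0List (m+1) = w0List m ++ (List.range m).reverse from rfl, PD_append, mul_assoc]
      rcases Nat.eq_zero_or_pos k with hk0 | hkpos
      · subst hk0
        rw [revRange_zero_decomp m hm1, PD_append, mul_assoc]
        have : (PD D [0] : A) * D 0 = 0 := by
          simp only [PD, List.map_cons, List.map_nil, List.prod_cons, List.prod_nil, mul_one]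
          exact hD2 0 hkn
        rw [this, mul_zero, mul_zero]
      · -- k ≥ 1 : B * D k = D (k-1) * c
        have hbd : ∃ c : A, (PD D ((List.range m).reverse) : A) * D k = D (k-1) * c := by
          rw [revRange_decomp m k hkpos (by omega), PD_append, PD_cons, PD_cons]
          have hl2 := PD_anticomm hDDdist ((List.range (k-1)).reverse) k hkn (fun ℓ hℓ => by
            simp only [List.mem_reverse, List.mem_range] at hℓ
            constructor <;> omega)
          have hl1 := PD_anticomm hDDdist ((List.range' (k+1) (m-(k+1))).reverse) (k-1)
            (by omega) (fun ℓ hℓ => by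
              simp only [List.mem_reverse, List.mem_range'_1] at hℓ
              constructor <;> omega)
          refine ⟨(-1:A)^((List.range (k-1)).reverse.length)
            * ((-1:A)^((List.range' (k+1) (m-(k+1))).reverse.length)
              * ((PD D ((List.range' (k+1) (m-(k+1))).reverse) : A)
                * (D k * (D (k-1) * PD D ((List.range (k-1)).reverse))))), ?_⟩
          have hbr : D k * D (k-1) * D k = D (k-1) * D k * D (k-1) := by
            have h := hbraid (k-1) (by omega)
            rw [show k-1+1 = k from by omega] at h
            exact h.symm
          calc PD D ((List.range' (k+1) (m-(k+1))).reverse)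
                * (D k * (D (k-1) * PD D ((List.range (k-1)).reverse))) * D k
              = PD D ((List.range' (k+1) (m-(k+1))).reverse)
                * (D k * (D (k-1) * (PD D ((List.range (k-1)).reverse) * D k))) := by
                simp only [mul_assoc]
            _ = (-1:A)^((List.range (k-1)).reverse.length)
                * (PD D ((List.range' (k+1) (m-(k+1))).reverse)
                  * ((D k * D (k-1) * D k) * PD D ((List.range (k-1)).reverse))) := by
                rw [hl2, mul_sgn_mid, mul_sgn_mid, mul_sgn_mid]
                simp only [mul_assoc]
            _ = (-1:A)^((List.range (k-1)).reverse.length)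
                * ((PD D ((List.range' (k+1) (m-(k+1))).reverse) * D (k-1))
                  * (D k * D (k-1) * PD D ((List.range (k-1)).reverse))) := by
                rw [hbr]
                simp only [mul_assoc]
            _ = D (k-1) * ((-1:A)^((List.range (k-1)).reverse.length)
                * ((-1:A)^((List.range' (k+1) (m-(k+1))).reverse.length)
                  * ((PD D ((List.range' (k+1) (m-(k+1))).reverse) : A)
                    * (D k * (D (k-1) * PD D ((List.range (k-1)).reverse)))))) := by
                rw [hl1]
                simp only [mul_assoc]
                conv_rhs => rw [mul_sgn_mid, mul_sgn_mid]
        obtain ⟨c, hc⟩ := hbd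
        rw [hc, ← mul_assoc, ih (by omega) (k-1) (by omega), zero_mul]

/-- **Step lemma**: absorb one `D j` into the state monomial. -/
lemma step (hxx : ∀ i j, i < n → j < n → i ≠ j → x i * x j = -(x j * x i))
    (hDDdist : ∀ i j, i + 1 < n → j + 1 < n → (i + 1 < j ∨ j + 1 < i) → D i * D j = -(D j * D i))
    (hD2 : ∀ i, i + 1 < n → D i * D i = 0)
    (hbraid : ∀ i, i + 2 < n → D i * D (i + 1) * D i = D (i + 1) * D i * D (i + 1))
    (hDx : ∀ i j, i + 1 < n → j < n → j ≠ i → j ≠ i + 1 → D i * x j = -(x j * D i))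
    (hmixa : ∀ i, i + 1 < n → x i * D i + D i * x (i + 1) = 1)
    (hmixb : ∀ i, i + 1 < n → D i * x i + x (i + 1) * D i = 1)
    {m j : ℕ} (hm : 1 ≤ m) (hmn : m < n) (hj : j < m) :
    (PD D (w0List n) : A) * evalX n x (Gf n m (j+1)) * D j
      = (-1:A)^(sExpN n m j) * ((PD D (w0List n) : A) * evalX n x (Gf n m j)) := by
  have hj1n : j + 1 < n := by omega
  have hj2n : j + 2 ≤ n := by omega
  set a' := n - m - 1 with ha'
  set e := Gf n m (j+1) with he
  set e' := Gf n m j with he'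
  have hval1 : e j = a' + 1 := by simp only [he, Gf]; split_ifs <;> omega
  have hval2 : e (j+1) = a' := by simp only [he, Gf]; split_ifs <;> omega
  have hval3 : e' j = a' := by simp only [he', Gf]; split_ifs <;> omega
  have hval4 : e' (j+1) = a' := by simp only [he', Gf]; split_ifs <;> omega
  have heq : ∀ i, i ≠ j → e i = e' i := by
    intro i hi
    simp only [he, he', Gf]; split_ifs <;> omega
  have hsplit : ∀ f : ℕ → ℕ, evalX n x f
      = ((List.range j).map fun i => x i ^ f i).prod
        * (x j ^ f j * (x (j+1) ^ f (j+1)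
          * ((List.range' (j+2) (n-(j+2))).map fun i => x i ^ f i).prod)) := by
    intro f
    rw [evalX, range_split j n hj2n]
    simp only [List.map_append, List.prod_append, List.map_cons, List.prod_cons, List.map_nil,
      List.prod_nil, one_mul, mul_one, mul_assoc]
  have hpre : ((List.range j).map fun i => x i ^ e i).prod
      = ((List.range j).map fun i => x i ^ e' i).prod := by
    congr 1
    refine List.map_congr_left fun i hi => ?_
    rw [heq i (by simp only [List.mem_range] at hi; omega)]
  have hsuf : ((List.range' (j+2) (n-(j+2))).map fun i => x i ^ e i).prod
      = ((List.range' (j+2) (n-(j+2))).map fun i => x i ^ e' i).prod := by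
    congr 1
    refine List.map_congr_left fun i hi => ?_
    rw [heq i (by simp only [List.mem_range'_1] at hi; omega)]
  obtain ⟨z, hz⟩ := core hxx hmixa hmixb (a' := a') hj1n
  have hsufmove := prod_comm_sign (D j) (fun i => x i ^ e i) e
    (List.range' (j+2) (n-(j+2))) (fun i hi => by
      have hmem : j+2 ≤ i ∧ i < j+2+(n-(j+2)) := List.mem_range'_1.mp hi
      exact D_xpow_comm hDx hj1n (by omega) (by omega) (by omega) (e i))
  have hpremove := prod_comm_sign (D j) (fun i => x i ^ e i) e
    (List.range j) (fun i hi => by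
      have hmem : i < j := List.mem_range.mp hi
      exact D_xpow_comm hDx hj1n (by omega) (by omega) (by omega) (e i))
  set Pre := ((List.range j).map fun i => x i ^ e i).prod with hPre
  set Suf := ((List.range' (j+2) (n-(j+2))).map fun i => x i ^ e i).prod with hSuf
  set P := (PD D (w0List n) : A) with hP
  set sufL := ((List.range' (j+2) (n-(j+2))).map e).sum with hsufL
  have hPzero : P * D j = 0 := Pzero hDDdist hD2 hbraid n le_rfl j hj1n
  have main : P * evalX n x e * D j = (-1:A)^(sufL + a') * (P * evalX n x e') := by
    calc P * evalX n x e * D j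
        = P * (Pre * (x j ^(a'+1) * (x (j+1)^a' * (Suf * D j)))) := by
          rw [hsplit e, hval1, hval2]
          simp only [mul_assoc]
          rfl
      _ = (-1:A)^sufL * (P * (Pre * (((x j ^(a'+1) * x (j+1)^a') * D j) * Suf))) := by
          rw [hsufmove]
          simp only [mul_sgn_mid]
          simp only [mul_assoc]
      _ = (-1:A)^sufL * (P * (Pre * ((D j * z + (-1:A)^a' * (x j^a' * x (j+1)^a')) * Suf))) := by
          rw [hz]
      _ = (-1:A)^sufL * (P * (Pre * ((D j * z) * Suf))
            + (-1:A)^a' * (P * (Pre * (x j^a' * (x (j+1)^a' * Suf))))) := by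
          rw [add_mul, mul_add, mul_add]
          congr 1
          congr 1
          rw [mul_assoc ((-1:A)^a'), mul_sgn_mid Pre, mul_sgn_mid P]
          simp only [mul_assoc]
      _ = (-1:A)^sufL * ((-1:A)^a' * (P * (Pre * (x j^a' * (x (j+1)^a' * Suf))))) := by
          have hzero : P * (Pre * ((D j * z) * Suf)) = 0 := by
            rw [show Pre * ((D j * z) * Suf) = (Pre * D j) * (z * Suf) from by
              simp only [mul_assoc], hpremove, mul_assoc ((-1:A)^((List.range j).map e).sum),
              mul_sgn_mid P, show (D j * Pre) * (z * Suf) = D j * (Pre * (z * Suf)) from by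
              simp only [mul_assoc], ← mul_assoc P (D j), hPzero, zero_mul, mul_zero]
          rw [hzero, zero_add]
      _ = (-1:A)^(sufL + a') * (P * evalX n x e') := by
          rw [hsplit e', hval3, hval4, ← hpre, ← hsuf, ← mul_assoc, ← pow_add]
  rw [main]
  congr 1
  refine (negOnePow_eq_of (k := j*(a'+1) + (a'+1)) ?_).symm
  -- arithmetic: sExpN n m j = (sufL + a') + 2*(j*(a'+1) + (a'+1))
  have hsufF : sufL = ∑ i ∈ Finset.Ico (j+2) n, e i := by
    rw [hsufL, list_range'_sum_eq_Ico e (n-(j+2)) (j+2), show (j+2)+(n-(j+2)) = n from by omega]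
  have hpreF : ∑ i ∈ Finset.Ico 0 j, e i = j * (a'+1) := by
    rw [Finset.sum_congr rfl (fun i hi => by
      have : 0 ≤ i ∧ i < j := by simpa using Finset.mem_Ico.mp hi
      show e i = a'+1
      simp only [he, Gf]; split_ifs <;> omega)]
    simp [mul_comm]
  have hDsum : ∑ i ∈ Finset.range n, e i = j*(a'+1) + ((a'+1) + (a' + sufL)) := by
    rw [Finset.range_eq_Ico, ← Finset.sum_Ico_consecutive (fun i => e i) (Nat.zero_le j) (by omega : j ≤ n),
      hpreF, Finset.sum_eq_sum_Ico_succ_bot (by omega : j < n),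
      Finset.sum_eq_sum_Ico_succ_bot (by omega : j+1 < n), hval1, hval2, hsufF]
  simp only [sExpN, ← he]
  rw [hDsum, show n - m = a'+1 from by omega]
  ring
lemma Gf_shift (n m : ℕ) : Gf n m 0 = Gf n (m+1) (m+1) := by
  funext i
  simp only [Gf]
  split_ifs <;> omega

section Push
variable (hxx : ∀ i j, i < n → j < n → i ≠ j → x i * x j = -(x j * x i))
  (hDDdist : ∀ i j, i + 1 < n → j + 1 < n → (i + 1 < j ∨ j + 1 < i) → D i * D j = -(D j * D i))
  (hD2 : ∀ i, i + 1 < n → D i * D i = 0)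
  (hbraid : ∀ i, i + 2 < n → D i * D (i + 1) * D i = D (i + 1) * D i * D (i + 1))
  (hDx : ∀ i j, i + 1 < n → j < n → j ≠ i → j ≠ i + 1 → D i * x j = -(x j * D i))
  (hmixa : ∀ i, i + 1 < n → x i * D i + D i * x (i + 1) = 1)
  (hmixb : ∀ i, i + 1 < n → D i * x i + x (i + 1) * D i = 1)

include hxx hDDdist hD2 hbraid hDx hmixa hmixb

lemma inner_push {m : ℕ} (hm : 1 ≤ m) (hmn : m < n) : ∀ j, j ≤ m → ∀ R : A,
    (PD D (w0List n) : A) * evalX n x (Gf n m j) * ((PD D ((List.range j).reverse) : A) * R)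
      = (-1:A)^(∑ t ∈ Finset.range j, sExpN n m t)
        * ((PD D (w0List n) : A) * evalX n x (Gf n m 0) * R) := by
  intro j
  induction j with
  | zero =>
      intro _ R
      simp [PD]
  | succ j ih =>
      intro hjm R
      have hrev : (List.range (j+1)).reverse = j :: (List.range j).reverse := by
        rw [List.range_succ, List.reverse_append]
        rfl
      rw [hrev, PD_cons, mul_assoc (D j) (PD D (List.range j).reverse) R]
      have hassoc : ∀ P E W : A, P * E * (D j * W) = (P * E * D j) * W := by
        intro P E W
        simp only [mul_assoc]
      rw [hassoc, step hxx hDDdist hD2 hbraid hDx hmixa hmixb hm hmn (by omega : j < m)]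
      rw [mul_assoc, ih (by omega) R]
      rw [mul_sgn_mid, ← mul_assoc, ← pow_add, Finset.sum_range_succ, Nat.add_comm]

lemma outer_push : ∀ c m, 1 ≤ m → m + c = n →
    (PD D (w0List n) : A) * evalX n x (Gf n m m) * (PD D (blocksFrom m c) : A)
      = (-1:A)^(∑ b ∈ Finset.Ico m n, ∑ t ∈ Finset.range b, sExpN n b t)
        * ((PD D (w0List n) : A)) := by
  intro c
  induction c with
  | zero =>
      intro m hm hmc
      have hmn : n = m := by omega
      subst hmn
      have hone : evalX n x (Gf n n n) = 1 := by
        rw [evalX]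
        refine List.prod_eq_one (fun y hy => ?_)
        obtain ⟨i, hi, rfl⟩ := List.mem_map.mp hy
        have : Gf n n n i = 0 := by simp only [Gf]; split_ifs <;> omega
        rw [this, pow_zero]
      rw [hone, Finset.Ico_self, Finset.sum_empty, pow_zero, one_mul, mul_one]
      simp [PD, blocksFrom]
  | succ c ih =>
      intro m hm hmc
      have hmn : m < n := by omega
      rw [blocksFrom_succ, PD_append, ← mul_assoc,
        show ((PD D (w0List n) : A) * evalX n x (Gf n m m) * PD D ((List.range m).reverse))
            * PD D (blocksFrom (m+1) c)
          = (PD D (w0List n) : A) * evalX n x (Gf n m m)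
            * (PD D ((List.range m).reverse) * PD D (blocksFrom (m+1) c)) from by
          simp only [mul_assoc],
        inner_push hxx hDDdist hD2 hbraid hDx hmixa hmixb hm hmn m le_rfl _,
        Gf_shift n m, ih (m+1) (by omega) (by omega),
        mul_sgn_mid, ← mul_assoc, ← pow_add,
        Finset.sum_eq_sum_Ico_succ_bot hmn (fun b => ∑ t ∈ Finset.range b, sExpN n b t)]
      congr 2
      omega

/-- **Master lemma**: `∂_{w0} · x^δ · ∂_{w0} = (-1)^{C(n,3)} ∂_{w0}`. -/
lemma master (hn : 1 ≤ n) :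
    (PD D (w0List n) : A) * xDeltaN n x * (PD D (w0List n) : A)
      = (-1:A)^(n.choose 3) * (PD D (w0List n) : A) := by
  have h1 : xDeltaN n x = evalX n x (Gf n 1 1) := by
    rw [xDeltaN, evalX]
    refine congrArg _ (List.map_congr_left fun i hi => ?_)
    have : i < n := List.mem_range.mp hi
    have hexp : n - 1 - i = Gf n 1 1 i := by simp only [Gf]; split_ifs <;> omega
    rw [hexp]
  have h2 : (PD D (w0List n) : A) = PD D (blocksFrom 1 (n-1)) := by
    rw [w0List_eq_blocksFrom]
  calc (PD D (w0List n) : A) * xDeltaN n x * (PD D (w0List n) : A)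
      = (PD D (w0List n) : A) * evalX n x (Gf n 1 1) * (PD D (blocksFrom 1 (n-1)) : A) := by
        rw [← h1, ← h2]
    _ = (-1:A)^(∑ b ∈ Finset.Ico 1 n, ∑ t ∈ Finset.range b, sExpN n b t)
          * ((PD D (w0List n) : A)) :=
        outer_push hxx hDDdist hD2 hbraid hDx hmixa hmixb (n-1) 1 le_rfl (by omega)
    _ = (-1:A)^(n.choose 3) * (PD D (w0List n) : A) := by
        obtain ⟨K, hK⟩ := totalParity n
        rw [hK]
        congr 1
        exact negOnePow_eq_of rfl

end Push

end Ring

end ONH5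

/-- In the odd nilHecke algebra `ONH_n` (presented abstractly by
odd generators `x_1,…,x_n`, `∂_1,…,∂_{n−1}` and the odd nilHecke relations),
the element `𝚎_n := (−1)^{C(n,3)} ∂_{w_0} x^δ` is an idempotent: `𝚎_n² = 𝚎_n`. -/
theorem stmt5 {A : Type*} [Ring A] (n : ℕ) (x D : ℕ → A)
    (hxx : ∀ i j, i < n → j < n → i ≠ j → x i * x j = -(x j * x i))
    (hDDdist : ∀ i j, i + 1 < n → j + 1 < n → (i + 1 < j ∨ j + 1 < i) →
      D i * D j = -(D j * D i))
    (hD2 : ∀ i, i + 1 < n → D i * D i = 0)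
    (hbraid : ∀ i, i + 2 < n → D i * D (i + 1) * D i = D (i + 1) * D i * D (i + 1))
    (hDx : ∀ i j, i + 1 < n → j < n → j ≠ i → j ≠ i + 1 → D i * x j = -(x j * D i))
    (hmixa : ∀ i, i + 1 < n → x i * D i + D i * x (i + 1) = 1)
    (hmixb : ∀ i, i + 1 < n → D i * x i + x (i + 1) * D i = 1) :
    onhIdem n x D * onhIdem n x D = onhIdem n x D := by
  rcases Nat.eq_zero_or_pos n with h0 | hn
  · subst h0
    simp [onhIdem, xDeltaN, show w0List 0 = [] from rfl]
  · have hM := ONH5.master (n := n) (x := x) (D := D)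
      hxx hDDdist hD2 hbraid hDx hmixa hmixb hn
    unfold onhIdem
    set c := n.choose 3 with hc
    set P : A := ((w0List n).map D).prod with hP
    set X : A := xDeltaN n x with hX
    have hPXP : P * X * P = (-1:A)^c * P := hM
    have hsq : ((-1:A))^c * (-1:A)^c = 1 := by
      have he : Even (c + c) := ⟨c, rfl⟩
      rw [← pow_add]; exact he.neg_one_pow
    calc ((-1:A)^c * (P * X)) * ((-1:A)^c * (P * X))
        = ((-1:A)^c * (-1:A)^c) * ((P * X * P) * X) := by
          rw [mul_assoc, ONH5.mul_sgn_mid]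
          simp only [mul_assoc]
      _ = (P * X * P) * X := by rw [hsq, one_mul]
      _ = ((-1:A)^c * P) * X := by rw [hPXP]
      _ = (-1:A)^c * (P * X) := by rw [mul_assoc]
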